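/- Let V be a finite set with weights w : V × V → [0,1], w(u,v)+w(v,u)=1 for distinct u,v. Let π¹ be any ranking of V and π* a ranking minimizing C(·) over all rankings of V. Define r(v) = 4√(2C(π¹)) + 2b(π¹,v,π¹(v)+1/2). Then for every v ∈ V: |π*(v) − π¹(v)| ≤ r(v). -/

import Mathlib

noncomputable def pos {V : Type*} [Fintype V] (π : V ≃ Fin (Fintype.card V)) (v : V) : ℝ :=
  ((π v : ℕ) : ℝ) + 1

noncomputable def bwt {V : Type*} [Fintype V] [DecidableEq V] (w : V → V → ℝ)
    (π : V ≃ Fin (Fintype.card V)) (v : V) (p : ℝ) : ℝ :=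
  ∑ u ∈ Finset.univ.erase v, if pos π u < p then w v u else w u v

noncomputable def fastCost {V : Type*} [Fintype V] (w : V → V → ℝ)
    (π : V ≃ Fin (Fintype.card V)) : ℝ :=
  ∑ uv ∈ Finset.univ.filter (fun uv : V × V => π uv.1 < π uv.2), w uv.2 uv.1

section Aux
set_option linter.unusedSectionVars false
variable {V : Type*} [Fintype V] [DecidableEq V]

lemma natlt_half {a b : ℕ} : ((a:ℝ) < (b:ℝ) + 1/2) ↔ a ≤ b := by
  constructor
  · intro h
    have h2 : (a:ℝ) < (b:ℝ) + 1 := by linarith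
    have : a < b + 1 := by exact_mod_cast h2
    omega
  · intro h
    have : (a:ℝ) ≤ (b:ℝ) := by exact_mod_cast h
    linarith

lemma pos_lt_pos {π : V ≃ Fin (Fintype.card V)} {x y : V} : pos π x < pos π y ↔ π x < π y := by
  unfold pos
  rw [Fin.lt_iff_val_lt_val]
  constructor
  · intro h; exact_mod_cast (by linarith : ((π x : ℕ):ℝ) < ((π y : ℕ):ℝ))
  · intro h; have : ((π x : ℕ):ℝ) < ((π y : ℕ):ℝ) := by exact_mod_cast h
    linarith

lemma bwt_nonneg {w : V → V → ℝ} (h01 : ∀ u v : V, 0 ≤ w u v ∧ w u v ≤ 1)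
    (π : V ≃ Fin (Fintype.card V)) (v : V) (p : ℝ) : 0 ≤ bwt w π v p := by
  refine Finset.sum_nonneg fun u _ => ?_
  split <;> [exact (h01 v u).1; exact (h01 u v).1]

lemma fastCost_nonneg {w : V → V → ℝ} (h01 : ∀ u v : V, 0 ≤ w u v ∧ w u v ≤ 1)
    (π : V ≃ Fin (Fintype.card V)) : 0 ≤ fastCost w π :=
  Finset.sum_nonneg fun uv _ => (h01 uv.2 uv.1).1

lemma exists_ranking (f : V → ℝ) (hf : Function.Injective f) :
    ∃ π : V ≃ Fin (Fintype.card V), ∀ a b : V, π a < π b ↔ f a < f b := by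
  classical
  set s : Finset ℝ := Finset.univ.image f with hs
  have hcard : s.card = Fintype.card V := by
    rw [hs, Finset.card_image_of_injective _ hf, Finset.card_univ]
  let e := s.orderIsoOfFin hcard
  have hmem : ∀ a : V, f a ∈ s := fun a => Finset.mem_image_of_mem f (Finset.mem_univ a)
  let g : V → Fin (Fintype.card V) := fun a => e.symm ⟨f a, hmem a⟩
  have hginj : Function.Injective g := by
    intro a b hab
    have := e.symm.injective hab
    exact hf (congrArg Subtype.val this)
  have hbij : Function.Bijective g :=
    (Fintype.bijective_iff_injective_and_card g).mpr ⟨hginj, by simp⟩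
  refine ⟨Equiv.ofBijective g hbij, fun a b => ?_⟩
  show g a < g b ↔ f a < f b
  rw [OrderIso.lt_iff_lt e.symm]
  exact Subtype.mk_lt_mk

noncomputable def restCost (w : V → V → ℝ) (π : V ≃ Fin (Fintype.card V)) (v : V) : ℝ :=
  ∑ a ∈ Finset.univ.erase v, ∑ b ∈ Finset.univ.erase v, if π a < π b then w b a else 0


lemma fastCost_split (w : V → V → ℝ) (π : V ≃ Fin (Fintype.card V)) (v : V) :
    fastCost w π = restCost w π v
      + ∑ u ∈ Finset.univ.erase v, (if π u < π v then w v u else w u v) := by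
  have h1 : fastCost w π = ∑ a : V, ∑ b : V, (if π a < π b then w b a else 0) := by
    rw [fastCost, Finset.sum_filter, ← Finset.univ_product_univ, Finset.sum_product]
  have hsplit : ∀ F : V → ℝ, ∑ a : V, F a = (∑ a ∈ Finset.univ.erase v, F a) + F v := by
    intro F
    rw [Finset.sum_erase_add _ _ (Finset.mem_univ v)]
  rw [h1, hsplit]
  have h2 : ∀ a : V, (∑ b : V, (if π a < π b then w b a else 0))
      = (∑ b ∈ Finset.univ.erase v, (if π a < π b then w b a else 0))
        + (if π a < π v then w v a else 0) := fun a => hsplit _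
  rw [Finset.sum_congr rfl (fun a _ => h2 a), Finset.sum_add_distrib, h2 v]
  have hvv : (if π v < π v then w v v else 0) = 0 := by simp
  rw [hvv, add_zero, restCost]
  have h3 : (∑ u ∈ Finset.univ.erase v, (if π u < π v then w v u else 0))
      + (∑ b ∈ Finset.univ.erase v, (if π v < π b then w b v else 0))
      = ∑ u ∈ Finset.univ.erase v, (if π u < π v then w v u else w u v) := by
    rw [← Finset.sum_add_distrib]
    refine Finset.sum_congr rfl fun u hu => ?_
    have hne : π u ≠ π v := fun h => (Finset.ne_of_mem_erase hu) (π.injective h)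
    rcases lt_or_gt_of_ne hne with h | h
    · simp [h, asymm h]
    · simp [h, asymm h, not_lt_of_gt h]
  linarith [h3]

lemma bwt_self (w : V → V → ℝ) (π : V ≃ Fin (Fintype.card V)) (v : V) :
    bwt w π v (pos π v + 1/2)
      = ∑ u ∈ Finset.univ.erase v, (if π u < π v then w v u else w u v) := by
  refine Finset.sum_congr rfl fun u hu => ?_
  have hne : (π u : ℕ) ≠ (π v : ℕ) := by
    intro h
    exact (Finset.ne_of_mem_erase hu) (π.injective (Fin.ext h))
  have : pos π u < pos π v + 1/2 ↔ π u < π v := by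
    unfold pos
    rw [Fin.lt_iff_val_lt_val]
    constructor
    · intro h
      have : ((π u : ℕ):ℝ) < ((π v : ℕ):ℝ) + 1/2 := by linarith
      have h2 := natlt_half.mp this
      omega
    · intro h
      have : ((π u : ℕ):ℝ) < ((π v : ℕ):ℝ) + 1/2 := natlt_half.mpr (le_of_lt h)
      linarith
  exact if_congr this rfl rfl
lemma card_pos_lt (π : V ≃ Fin (Fintype.card V)) (p : ℝ) :
    (Finset.univ.filter (fun x : V => pos π x < p)).card
      = (Finset.univ.filter (fun i : Fin (Fintype.card V) => ((i:ℕ):ℝ) + 1 < p)).card := by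
  apply Finset.card_equiv π
  intro x
  rw [Finset.mem_filter, Finset.mem_filter]
  simp [pos]

lemma cardAB (π π' : V ≃ Fin (Fintype.card V)) (p : ℝ) :
    (Finset.univ.filter fun x : V => pos π x < p ∧ ¬ pos π' x < p).card
      = (Finset.univ.filter fun x : V => ¬ pos π x < p ∧ pos π' x < p).card := by
  classical
  have h1 := Finset.card_filter_add_card_filter_not
      (s := Finset.univ.filter fun x : V => pos π x < p) (p := fun x => pos π' x < p)
  have h2 := Finset.card_filter_add_card_filter_not
      (s := Finset.univ.filter fun x : V => pos π' x < p) (p := fun x => pos π x < p)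
  rw [Finset.filter_filter, Finset.filter_filter] at h1 h2
  have e1 : (Finset.univ.filter fun x : V => pos π' x < p ∧ pos π x < p)
      = Finset.univ.filter fun x : V => pos π x < p ∧ pos π' x < p :=
    Finset.filter_congr (fun x _ => and_comm)
  have e2 : (Finset.univ.filter fun x : V => pos π' x < p ∧ ¬ pos π x < p)
      = Finset.univ.filter fun x : V => ¬ pos π x < p ∧ pos π' x < p :=
    Finset.filter_congr (fun x _ => and_comm)
  rw [e1, e2] at h2
  have e3 := card_pos_lt π p
  have e4 := card_pos_lt π' p
  omega

lemma inv_le_cost (w : V → V → ℝ) (h01 : ∀ u v : V, 0 ≤ w u v ∧ w u v ≤ 1)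
    (hsum : ∀ u v : V, u ≠ v → w u v + w v u = 1)
    (π π' : V ≃ Fin (Fintype.card V)) :
    ((((Finset.univ ×ˢ Finset.univ).filter
        fun xy : V × V => π xy.1 < π xy.2 ∧ π' xy.2 < π' xy.1).card : ℕ) : ℝ)
      ≤ fastCost w π + fastCost w π' := by
  classical
  set I := (Finset.univ ×ˢ Finset.univ).filter
      (fun xy : V × V => π xy.1 < π xy.2 ∧ π' xy.2 < π' xy.1) with hI
  have h1 : ∑ xy ∈ I, w xy.2 xy.1 ≤ fastCost w π := by
    apply Finset.sum_le_sum_of_subset_of_nonneg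
    · intro xy hxy
      rw [hI, Finset.mem_filter] at hxy
      exact Finset.mem_filter.mpr ⟨Finset.mem_univ _, hxy.2.1⟩
    · exact fun i _ _ => (h01 i.2 i.1).1
  have h2 : ∑ xy ∈ I, w xy.1 xy.2 ≤ fastCost w π' := by
    have hswap : ∑ xy ∈ I, w xy.1 xy.2 = ∑ xy ∈ I.image Prod.swap, w xy.2 xy.1 := by
      rw [Finset.sum_image (fun x _ y _ h => Prod.swap_injective h)]
      rfl
    rw [hswap]
    apply Finset.sum_le_sum_of_subset_of_nonneg
    · intro xy hxy
      rw [Finset.mem_image] at hxy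
      obtain ⟨ab, hab, rfl⟩ := hxy
      rw [hI, Finset.mem_filter] at hab
      exact Finset.mem_filter.mpr ⟨Finset.mem_univ _, hab.2.2⟩
    · exact fun i _ _ => (h01 i.2 i.1).1
  have h3 : ∑ xy ∈ I, (w xy.2 xy.1 + w xy.1 xy.2) = (I.card : ℝ) := by
    rw [Finset.sum_congr rfl (g := fun _ => (1:ℝ)) (fun xy hxy => ?_)]
    · simp
    · rw [hI, Finset.mem_filter] at hxy
      have hne : xy.2 ≠ xy.1 := fun h => absurd (congrArg π h) (ne_of_gt hxy.2.1)
      exact hsum xy.2 xy.1 hne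
  rw [Finset.sum_add_distrib] at h3
  linarith

lemma bwt_close (w : V → V → ℝ) (h01 : ∀ u v : V, 0 ≤ w u v ∧ w u v ≤ 1)
    (hsum : ∀ u v : V, u ≠ v → w u v + w v u = 1)
    (π π' : V ≃ Fin (Fintype.card V)) (v : V) (p : ℝ) :
    |bwt w π v p - bwt w π' v p| ≤ 2 * Real.sqrt (fastCost w π + fastCost w π') := by
  classical
  set A := Finset.univ.filter (fun x : V => pos π x < p ∧ ¬ pos π' x < p) with hA
  set B := Finset.univ.filter (fun x : V => ¬ pos π x < p ∧ pos π' x < p) with hB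
  have hABcard : A.card = B.card := cardAB π π' p
  set I := (Finset.univ ×ˢ Finset.univ).filter
      (fun xy : V × V => π xy.1 < π xy.2 ∧ π' xy.2 < π' xy.1) with hI
  have hsub : A ×ˢ B ⊆ I := by
    intro xy hxy
    rw [Finset.mem_product, hA, hB, Finset.mem_filter, Finset.mem_filter] at hxy
    obtain ⟨⟨_, h1, h2⟩, ⟨_, h3, h4⟩⟩ := hxy
    refine Finset.mem_filter.mpr ⟨by simp, ?_, ?_⟩
    · exact pos_lt_pos.mp (lt_of_lt_of_le h1 (not_lt.mp h3))
    · exact pos_lt_pos.mp (lt_of_lt_of_le h4 (not_lt.mp h2))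
  have hcard : A.card * B.card ≤ I.card := by
    rw [← Finset.card_product]
    exact Finset.card_le_card hsub
  have hdiff : |bwt w π v p - bwt w π' v p| ≤ ((A.card : ℝ) + B.card) := by
    rw [bwt, bwt, ← Finset.sum_sub_distrib]
    refine (Finset.abs_sum_le_sum_abs _ _).trans ?_
    have hbound : ∀ u ∈ Finset.univ.erase v,
        |(if pos π u < p then w v u else w u v) - (if pos π' u < p then w v u else w u v)|
          ≤ (if u ∈ A ∪ B then (1:ℝ) else 0) := by
      intro u _
      by_cases h1 : pos π u < p <;> by_cases h2 : pos π' u < p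
      · rw [if_pos h1, if_pos h2, sub_self, abs_zero]
        split <;> norm_num
      · have hu : u ∈ A ∪ B := Finset.mem_union_left _ (by simp [hA, h1]; exact not_lt.mp h2)
        simp only [h1, h2, if_pos, if_neg, hu, if_true, not_false_iff]
        have := h01 v u; have := h01 u v
        rw [abs_le]; constructor <;> simp <;> linarith
      · have hu : u ∈ A ∪ B := Finset.mem_union_right _ (by simp [hB, h2]; exact not_lt.mp h1)
        simp only [h1, h2, if_pos, if_neg, hu, if_true, not_false_iff]
        have := h01 v u; have := h01 u v
        rw [abs_le]; constructor <;> simp <;> linarith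
      · rw [if_neg h1, if_neg h2, sub_self, abs_zero]
        split <;> norm_num
    refine (Finset.sum_le_sum hbound).trans ?_
    have : ∑ u ∈ Finset.univ.erase v, (if u ∈ A ∪ B then (1:ℝ) else 0)
        = (((Finset.univ.erase v) ∩ (A ∪ B)).card : ℝ) := by
      rw [Finset.sum_ite_mem]
      simp
    rw [this]
    have h5 : ((Finset.univ.erase v) ∩ (A ∪ B)).card ≤ A.card + B.card :=
      le_trans (Finset.card_le_card (Finset.inter_subset_right)) (Finset.card_union_le A B)
    exact_mod_cast h5
  have hCnn : (0:ℝ) ≤ fastCost w π + fastCost w π' :=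
    add_nonneg (fastCost_nonneg h01 π) (fastCost_nonneg h01 π')
  have hAle : (A.card : ℝ) ≤ Real.sqrt (fastCost w π + fastCost w π') := by
    rw [Real.le_sqrt (by positivity) hCnn]
    calc ((A.card : ℝ))^2 = ((A.card * B.card : ℕ) : ℝ) := by
          rw [hABcard]; push_cast; ring
      _ ≤ (I.card : ℝ) := by exact_mod_cast hcard
      _ ≤ fastCost w π + fastCost w π' := inv_le_cost w h01 hsum π π'
  have hBA : (B.card : ℝ) = A.card := by exact_mod_cast hABcard.symm
  calc |bwt w π v p - bwt w π' v p| ≤ (A.card : ℝ) + B.card := hdiff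
    _ = 2 * (A.card : ℝ) := by rw [hBA]; ring
    _ ≤ 2 * Real.sqrt (fastCost w π + fastCost w π') := by linarith
lemma half_ne_int (k m : ℕ) : ((k:ℝ) + 1/2) ≠ ((m:ℝ) + 1) := by
  intro h
  have h2 : ((2*k+1 : ℕ) : ℝ) = ((2*m+2 : ℕ) : ℝ) := by push_cast; linarith
  have : 2*k+1 = 2*m+2 := by exact_mod_cast h2
  omega

lemma bwt_opt (w : V → V → ℝ)
    (πstar : V ≃ Fin (Fintype.card V))
    (hopt : ∀ π : V ≃ Fin (Fintype.card V), fastCost w πstar ≤ fastCost w π)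
    (v : V) (k : ℕ) :
    bwt w πstar v (pos πstar v + 1/2) ≤ bwt w πstar v ((k:ℝ) + 1/2) := by
  classical
  set f : V → ℝ := fun u => if u = v then (k:ℝ) + 1/2 else pos πstar u with hf
  have hfv : f v = (k:ℝ) + 1/2 := by simp [hf]
  have hfu : ∀ u : V, u ≠ v → f u = pos πstar u := fun u hu => by simp [hf, hu]
  have hfinj : Function.Injective f := by
    intro a b hab
    by_cases ha : a = v <;> by_cases hb : b = v
    · rw [ha, hb]
    · exfalso
      rw [ha, hfv, hfu b hb] at hab
      exact half_ne_int k (πstar b) hab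
    · exfalso
      rw [hb, hfv, hfu a ha] at hab
      exact half_ne_int k (πstar a) hab.symm
    · rw [hfu a ha, hfu b hb] at hab
      unfold pos at hab
      have : ((πstar a : ℕ) : ℝ) = ((πstar b : ℕ) : ℝ) := by linarith
      exact πstar.injective (Fin.ext (by exact_mod_cast this))
  obtain ⟨π', hπ'⟩ := exists_ranking f hfinj
  have h1 := fastCost_split w πstar v
  have h2 := fastCost_split w π' v
  have hrest : restCost w π' v = restCost w πstar v := by
    refine Finset.sum_congr rfl fun a ha => Finset.sum_congr rfl fun b hb => ?_
    have hA : a ≠ v := Finset.ne_of_mem_erase ha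
    have hB : b ≠ v := Finset.ne_of_mem_erase hb
    have hiff : π' a < π' b ↔ πstar a < πstar b := by
      rw [hπ', hfu a hA, hfu b hB]
      exact pos_lt_pos
    exact if_congr hiff rfl rfl
  have hvpart : (∑ u ∈ Finset.univ.erase v, (if π' u < π' v then w v u else w u v))
      = bwt w πstar v ((k:ℝ) + 1/2) := by
    refine Finset.sum_congr rfl fun u hu => ?_
    have hU : u ≠ v := Finset.ne_of_mem_erase hu
    have hiff : π' u < π' v ↔ pos πstar u < (k:ℝ) + 1/2 := by
      rw [hπ', hfu u hU, hfv]
    exact if_congr hiff rfl rfl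
  have hle := hopt π'
  rw [h1, h2, hrest, hvpart] at hle
  rw [bwt_self]
  linarith

lemma count_le (w : V → V → ℝ) (h01 : ∀ u v : V, 0 ≤ w u v ∧ w u v ≤ 1)
    (hsum : ∀ u v : V, u ≠ v → w u v + w v u = 1)
    (π : V ≃ Fin (Fintype.card V)) (v : V) (a b : ℕ) (hab : a ≤ b)
    (hb : b ≤ Fintype.card V)
    (hv : (π v : ℕ) ∉ Finset.Ico a b) (p q : ℝ)
    (hpq : ∀ u : V, u ≠ v → (π u : ℕ) ∈ Finset.Ico a b → (pos π u < p ∧ ¬ pos π u < q)) :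
    ((b:ℝ) - a) ≤ bwt w π v p + bwt w π v q := by
  classical
  set S := Finset.univ.filter (fun u : V => u ≠ v ∧ (π u : ℕ) ∈ Finset.Ico a b) with hS
  have hn : 0 < Fintype.card V := Fintype.card_pos_iff.mpr ⟨v⟩
  have hcard : (Finset.Ico a b).card ≤ S.card := by
    apply Finset.card_le_card_of_injOn
        (fun j => π.symm ⟨j % Fintype.card V, Nat.mod_lt _ hn⟩)
    · intro j hj
      have hjb : j < Fintype.card V := lt_of_lt_of_le (Finset.mem_Ico.mp hj).2 hb
      have hmod : j % Fintype.card V = j := Nat.mod_eq_of_lt hjb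
      have hπj : (π (π.symm ⟨j % Fintype.card V, Nat.mod_lt _ hn⟩) : ℕ) = j := by
        rw [Equiv.apply_symm_apply]; exact hmod
      simp only [Finset.mem_coe, hS, Finset.mem_filter]
      refine ⟨Finset.mem_univ _, fun h => ?_, by rw [hπj]; exact hj⟩
      · apply hv
        rw [← h, hπj]
        exact hj
    · intro x hx y hy hxy
      have hx' : x % Fintype.card V = x :=
        Nat.mod_eq_of_lt (lt_of_lt_of_le (Finset.mem_Ico.mp hx).2 hb)
      have hy' : y % Fintype.card V = y :=
        Nat.mod_eq_of_lt (lt_of_lt_of_le (Finset.mem_Ico.mp hy).2 hb)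
      have := π.symm.injective hxy
      rw [Fin.mk_eq_mk, hx', hy'] at this
      exact this
  have hsum1 : (S.card : ℝ) ≤ bwt w π v p + bwt w π v q := by
    rw [bwt, bwt, ← Finset.sum_add_distrib]
    have hSsub : S ⊆ Finset.univ.erase v := by
      intro u hu
      rw [hS, Finset.mem_filter] at hu
      exact Finset.mem_erase.mpr ⟨hu.2.1, Finset.mem_univ u⟩
    calc (S.card : ℝ) = ∑ _u ∈ S, (1:ℝ) := by simp
      _ ≤ ∑ u ∈ S, ((if pos π u < p then w v u else w u v)
            + (if pos π u < q then w v u else w u v)) := by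
          apply Finset.sum_le_sum
          intro u hu
          rw [hS, Finset.mem_filter] at hu
          obtain ⟨_, hne, hmem⟩ := hu
          obtain ⟨hp', hq'⟩ := hpq u hne hmem
          rw [if_pos hp', if_neg hq']
          exact le_of_eq (hsum v u (Ne.symm hne)).symm
      _ ≤ ∑ u ∈ Finset.univ.erase v, ((if pos π u < p then w v u else w u v)
            + (if pos π u < q then w v u else w u v)) := by
          apply Finset.sum_le_sum_of_subset_of_nonneg hSsub
          intro u _ _
          have h1 := h01 v u; have h2 := h01 u v
          apply add_nonneg <;> · split <;> [exact (h01 v u).1; exact (h01 u v).1]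
  have hico : ((Finset.Ico a b).card : ℝ) = (b:ℝ) - a := by
    rw [Nat.card_Ico, Nat.cast_sub hab]
  have : ((Finset.Ico a b).card : ℝ) ≤ (S.card : ℝ) := by exact_mod_cast hcard
  linarith

lemma bwt_shift (w : V → V → ℝ) (π : V ≃ Fin (Fintype.card V)) (v : V) :
    bwt w π v (pos π v - 1/2) = bwt w π v (pos π v + 1/2) := by
  refine Finset.sum_congr rfl fun u hu => ?_
  have hne : (π u : ℕ) ≠ (π v : ℕ) := by
    intro h
    exact (Finset.ne_of_mem_erase hu) (π.injective (Fin.ext h))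
  have hiff : pos π u < pos π v - 1/2 ↔ pos π u < pos π v + 1/2 := by
    unfold pos
    constructor
    · intro h; linarith
    · intro h
      have h2 : (π u : ℕ) ≤ (π v : ℕ) := by
        have : ((π u : ℕ):ℝ) < ((π v : ℕ):ℝ) + 1/2 := by linarith
        exact natlt_half.mp this
      have h3 : (π u : ℕ) < (π v : ℕ) := lt_of_le_of_ne h2 hne
      have h4 : (π u : ℕ) + 1 ≤ (π v : ℕ) := h3
      have : ((π u : ℕ):ℝ) + 1 ≤ ((π v : ℕ):ℝ) := by exact_mod_cast h4
      linarith
  exact if_congr hiff rfl rfl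
end Aux

theorem stmt7 {V : Type*} [Fintype V] [DecidableEq V] (w : V → V → ℝ)
    (h01 : ∀ u v : V, 0 ≤ w u v ∧ w u v ≤ 1)
    (hsum : ∀ u v : V, u ≠ v → w u v + w v u = 1)
    (π1 πstar : V ≃ Fin (Fintype.card V))
    (hopt : ∀ π : V ≃ Fin (Fintype.card V), fastCost w πstar ≤ fastCost w π) :
    ∀ v : V, |pos πstar v - pos π1 v|
      ≤ 4 * Real.sqrt (2 * fastCost w π1) + 2 * bwt w π1 v (pos π1 v + 1/2) := by
  intro v
  have hC1 : 0 ≤ fastCost w π1 := fastCost_nonneg h01 π1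
  have hCs : fastCost w πstar ≤ fastCost w π1 := hopt π1
  set R := Real.sqrt (2 * fastCost w π1) with hRdef
  have hRnn : 0 ≤ R := Real.sqrt_nonneg _
  have hR : ∀ p : ℝ, |bwt w π1 v p - bwt w πstar v p| ≤ 2 * R := by
    intro p
    refine (bwt_close w h01 hsum π1 πstar v p).trans ?_
    have h1 : fastCost w π1 + fastCost w πstar ≤ 2 * fastCost w π1 := by linarith
    have h2 := Real.sqrt_le_sqrt h1
    linarith
  set B := bwt w π1 v (pos π1 v + 1/2) with hBdef
  have hBnn : 0 ≤ B := bwt_nonneg h01 π1 v _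
  have hp1 : pos π1 v = ((π1 v : ℕ) : ℝ) + 1 := rfl
  have hps : pos πstar v = ((πstar v : ℕ) : ℝ) + 1 := rfl
  have hopt' : bwt w πstar v (pos πstar v + 1/2) ≤ bwt w π1 v (pos π1 v + 1/2) + 2 * R := by
    have h1 := bwt_opt w πstar hopt v ((π1 v : ℕ) + 1)
    have h2 : (((π1 v : ℕ) + 1 : ℕ) : ℝ) + 1/2 = pos π1 v + 1/2 := by
      rw [hp1]; push_cast; ring
    rw [h2] at h1
    have h3 := hR (pos π1 v + 1/2)
    rw [abs_le] at h3
    linarith [h3.1]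
  rcases lt_trichotomy ((πstar v : ℕ)) ((π1 v : ℕ)) with h | h | h
  · -- πstar v < π1 v
    have hd : |pos πstar v - pos π1 v| = ((π1 v : ℕ) : ℝ) - ((πstar v : ℕ) : ℝ) := by
      rw [hp1, hps, abs_of_nonpos (by
        have : ((πstar v : ℕ) : ℝ) ≤ ((π1 v : ℕ) : ℝ) := by exact_mod_cast le_of_lt h
        linarith)]
      ring
    have hcount := count_le w h01 hsum π1 v (πstar v : ℕ) (π1 v : ℕ) (le_of_lt h)
      (le_of_lt (π1 v).isLt)
      (by simp [Finset.mem_Ico])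
      (pos π1 v + 1/2) (pos πstar v - 1/2) ?_
    · -- chain
      have hstep2 := hR (pos πstar v - 1/2)
      rw [abs_le] at hstep2
      have hstep3 : bwt w πstar v (pos πstar v - 1/2) ≤ B + 2 * R := by
        rw [bwt_shift]
        exact hopt'
      rw [hd]
      linarith [hcount, hstep2.2, hstep3]
    · intro u hune hu
      rw [Finset.mem_Ico] at hu
      have hu1 : ((πstar v : ℕ) : ℝ) ≤ ((π1 u : ℕ) : ℝ) := by exact_mod_cast hu.1
      have hu2 : ((π1 u : ℕ) : ℝ) + 1 ≤ ((π1 v : ℕ) : ℝ) := by exact_mod_cast hu.2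
      have hpu : pos π1 u = ((π1 u : ℕ) : ℝ) + 1 := rfl
      constructor
      · rw [hpu, hp1]; linarith
      · rw [hpu, hps]; push_neg; linarith
  · -- equal
    have : pos πstar v = pos π1 v := by rw [hp1, hps, h]
    rw [this, sub_self, abs_zero]
    linarith
  · -- π1 v < πstar v
    have hd : |pos πstar v - pos π1 v| = ((πstar v : ℕ) : ℝ) - ((π1 v : ℕ) : ℝ) := by
      rw [hp1, hps, abs_of_nonneg (by
        have : ((π1 v : ℕ) : ℝ) ≤ ((πstar v : ℕ) : ℝ) := by exact_mod_cast le_of_lt h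
        linarith)]
      ring
    have hcount := count_le w h01 hsum π1 v ((π1 v : ℕ) + 1) ((πstar v : ℕ) + 1) (by omega)
      ((πstar v).isLt)
      (by simp [Finset.mem_Ico])
      (pos πstar v + 1/2) (pos π1 v + 1/2) ?_
    · have hstep2 := hR (pos πstar v + 1/2)
      rw [abs_le] at hstep2
      have hcast : (((πstar v : ℕ) + 1 : ℕ) : ℝ) - (((π1 v : ℕ) + 1 : ℕ) : ℝ)
          = ((πstar v : ℕ) : ℝ) - ((π1 v : ℕ) : ℝ) := by push_cast; ring
      rw [hcast] at hcount
      rw [hd]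
      linarith [hcount, hstep2.2, hopt']
    · intro u hune hu
      rw [Finset.mem_Ico] at hu
      have hu1 : ((π1 v : ℕ) : ℝ) + 1 ≤ ((π1 u : ℕ) : ℝ) := by exact_mod_cast hu.1
      have hu2 : ((π1 u : ℕ) : ℝ) ≤ ((πstar v : ℕ) : ℝ) := by exact_mod_cast Nat.lt_succ_iff.mp hu.2
      have hpu : pos π1 u = ((π1 u : ℕ) : ℝ) + 1 := rfl
      constructor
      · rw [hpu, hps]; linarith
      · rw [hpu, hp1]; push_neg; linarith
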